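/- Assume 0 < ε < 1/2 satisfies both (1/2)·(1 − 2ε)^{−2}·(1 + 2ε) ≤ 1 and 6ε/(1 − 2ε) ≤ 1, that 0 < p ≤ 1 satisfies p^{k−1} B^k ≤ ε·8^{−k} for all k ≥ 2, and that |J_k| ≤ B^k for all k ≥ 2. Then f is a contraction on S: there exists a constant c with 0 ≤ c < 1 such that for all α, β ∈ S one has ‖f(α) − f(β)‖ ≤ c · ‖α − β‖. -/

import Mathlib

open scoped ENNReal

/-- The norm `‖α‖ = Σ_{k≥2} 2^k |α_k|`, valued in `[0,∞]` so that it is always defined;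
membership in the space `S` below forces it to be finite. -/
noncomputable def seqNorm (α : ℕ → ℝ) : ℝ≥0∞ :=
  ∑' k : ℕ, if 2 ≤ k then (2 : ℝ≥0∞) ^ k * ENNReal.ofReal |α k| else 0

/-- `A(α) = Σ_{k≥2} k α_k`. -/
noncomputable def seqA (α : ℕ → ℝ) : ℝ :=
  ∑' k : ℕ, if 2 ≤ k then (k : ℝ) * α k else 0

/-- The map `f(α)_k = J_k p^k (1 - 2A(α))^{-2k} (1 - 2A(α)/p)^k` for `k ≥ 2`
(entries of index `< 2` are irrelevant and set to `0`). -/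
noncomputable def fMap (p : ℝ) (J : ℕ → ℝ) (α : ℕ → ℝ) : ℕ → ℝ := fun k =>
  if 2 ≤ k then J k * p ^ k * ((1 - 2 * seqA α)⁻¹) ^ (2 * k) * (1 - 2 * seqA α / p) ^ k
  else 0

/-- The set `S = {α : ‖α‖ ≤ p ε}`. -/
def Sset (p ε : ℝ) : Set (ℕ → ℝ) := {α | seqNorm α ≤ ENNReal.ofReal (p * ε)}

lemma aux_pow_sub_pow (x y M : ℝ) (hx : |x| ≤ M) (hy : |y| ≤ M) (n : ℕ) :
    |x ^ n - y ^ n| ≤ n * M ^ (n - 1) * |x - y| := by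
  induction n with
  | zero => simp
  | succ n ih =>
    have hM : 0 ≤ M := (abs_nonneg x).trans hx
    have h1 : x ^ (n+1) - y ^ (n+1) = x * (x ^ n - y ^ n) + (x - y) * y ^ n := by ring
    have h2 : |x ^ (n+1) - y ^ (n+1)| ≤ |x| * |x ^ n - y ^ n| + |x - y| * |y| ^ n := by
      rw [h1]
      refine (abs_add_le _ _).trans ?_
      rw [abs_mul, abs_mul, abs_pow]
    refine h2.trans ?_
    have h3 : |x| * |x ^ n - y ^ n| ≤ M * (n * M ^ (n-1) * |x - y|) :=
      mul_le_mul hx ih (abs_nonneg _) hM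
    have h4 : |x - y| * |y| ^ n ≤ |x - y| * M ^ n := by
      gcongr
    have h5 : M * (↑n * M ^ (n-1) * |x-y|) ≤ ↑n * M ^ n * |x - y| := by
      cases n with
      | zero => simp
      | succ m =>
        simp only [Nat.add_sub_cancel]
        have : M * (↑(m+1) * M ^ m * |x-y|) = ↑(m+1) * (M^m * M) * |x - y| := by ring
        rw [this, ← pow_succ]
    push_cast
    push_cast at h5
    nlinarith [abs_nonneg (x-y)]

noncomputable def gfun (α : ℕ → ℝ) (k : ℕ) : ℝ := if 2 ≤ k then (2:ℝ)^k * |α k| else 0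

lemma gfun_nonneg (α : ℕ → ℝ) (k : ℕ) : 0 ≤ gfun α k := by
  unfold gfun; split <;> positivity

lemma seqNorm_eq (α : ℕ → ℝ) : seqNorm α = ∑' k, ENNReal.ofReal (gfun α k) := by
  unfold seqNorm gfun
  congr 1
  funext k
  split
  · rw [ENNReal.ofReal_mul (by positivity), ENNReal.ofReal_pow (by norm_num)]
    norm_num
  · simp

lemma summable_gfun (α : ℕ → ℝ) (h : seqNorm α ≠ ⊤) : Summable (gfun α) := by
  rw [seqNorm_eq] at h
  have := ENNReal.summable_toReal h
  refine this.congr fun k => ?_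
  rw [ENNReal.toReal_ofReal (gfun_nonneg α k)]

lemma seqNorm_eq_ofReal (α : ℕ → ℝ) (h : Summable (gfun α)) :
    seqNorm α = ENNReal.ofReal (∑' k, gfun α k) := by
  rw [seqNorm_eq, ENNReal.ofReal_tsum_of_nonneg (gfun_nonneg α) h]

lemma tsum_gfun_nonneg (α : ℕ → ℝ) : 0 ≤ ∑' k, gfun α k :=
  tsum_nonneg (gfun_nonneg α)

lemma summable_kfun (α : ℕ → ℝ) (h : Summable (gfun α)) :
    Summable (fun k : ℕ => if 2 ≤ k then (k:ℝ) * α k else 0) := by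
  refine Summable.of_norm_bounded h fun k => ?_
  simp only [Real.norm_eq_abs]
  unfold gfun
  split
  · rename_i hk
    rw [abs_mul, Nat.abs_cast]
    gcongr
    exact_mod_cast (Nat.lt_two_pow_self (n := k)).le
  · simp

lemma abs_seqA_le (α : ℕ → ℝ) (h : Summable (gfun α)) :
    |seqA α| ≤ (1/2) * ∑' k, gfun α k := by
  unfold seqA
  have hs := summable_kfun α h
  calc |∑' k : ℕ, if 2 ≤ k then (k:ℝ) * α k else 0|
      ≤ ∑' k : ℕ, ‖if 2 ≤ k then (k:ℝ) * α k else 0‖ := by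
        exact norm_tsum_le_tsum_norm (hs.abs.congr fun k => (Real.norm_eq_abs _).symm)
    _ ≤ ∑' k, (1/2) * gfun α k := by
        refine Summable.tsum_le_tsum (fun k => ?_) (hs.abs.congr fun k => (Real.norm_eq_abs _).symm) (h.mul_left _)
        simp only [Real.norm_eq_abs]
        unfold gfun
        split
        · rename_i hk
          rw [abs_mul, Nat.abs_cast]
          have hk1 : (k:ℝ) ≤ 2^(k-1) := by
            have h2 : k ≤ 2^(k-1) := by have := Nat.lt_two_pow_self (n := k-1); omega
            exact_mod_cast h2
          calc (k:ℝ) * |α k| ≤ 2^(k-1) * |α k| := by gcongr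
            _ = (1/2) * (2^k * |α k|) := by
                have : (2:ℝ)^k = 2^(k-1) * 2 := by
                  rw [← pow_succ]; congr 1; omega
                rw [this]; ring
        · simp
    _ = (1/2) * ∑' k, gfun α k := tsum_mul_left

lemma seqA_sub (α β : ℕ → ℝ) (hα : Summable (gfun α)) (hβ : Summable (gfun β)) :
    seqA (fun k => α k - β k) = seqA α - seqA β := by
  unfold seqA
  rw [← Summable.tsum_sub (summable_kfun α hα) (summable_kfun β hβ)]
  congr 1
  funext k
  split <;> ring

lemma seqNorm_sub_le (α β : ℕ → ℝ) :
    seqNorm (fun k => α k - β k) ≤ seqNorm α + seqNorm β := by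
  unfold seqNorm
  rw [← ENNReal.tsum_add]
  refine ENNReal.tsum_le_tsum fun k => ?_
  split
  · rw [← mul_add]
    gcongr
    rw [← ENNReal.ofReal_add (abs_nonneg _) (abs_nonneg _)]
    exact ENNReal.ofReal_le_ofReal (abs_sub _ _)
  · simp

lemma key2 (ε p B Jk δ r W va vb wa wb : ℝ) (m : ℕ)
    (hr0 : 0 < r) (hr0' : 0 ≤ r) (hW0 : 0 < W) (hW0' : 0 ≤ W)
    (hp0 : 0 < p) (hp0' : 0 ≤ p) (hp1 : p ≤ 1)
    (hε0 : 0 < ε) (hε0' : 0 ≤ ε) (hδ : 0 ≤ δ) (hB : 0 ≤ B)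
    (hva : |va| ≤ r) (hvb : |vb| ≤ r) (hwa : |wa| ≤ W) (hwb : |wb| ≤ W)
    (hvab : |va - vb| ≤ 2 * r^2 * δ) (hwab : |wa - wb| ≤ 2 * δ / p)
    (hr2W : r^2 * W ≤ 2) (hW1 : 1 ≤ W)
    (hpB : p^(m+1) * B^(m+2) ≤ ε * (8:ℝ)⁻¹^(m+2))
    (hJ : |Jk| ≤ B^(m+2)) :
    (2:ℝ)^(m+2) * |Jk * p^(m+2) * va^(2*(m+2)) * wa^(m+2)
        - Jk * p^(m+2) * vb^(2*(m+2)) * wb^(m+2)|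
      ≤ (2*ε/W + 4*p*ε*r) * (((m:ℝ)+2) * (1/2)^(m+2)) * δ := by
  have hr2 : r^2 ≤ 2/W := (le_div_iff₀ hW0).mpr hr2W
  -- pow difference bounds
  have hW_pow : |wa^(m+2) - wb^(m+2)| ≤ ((m:ℝ)+2) * W^(m+1) * (2*δ/p) := by
    have h := aux_pow_sub_pow wa wb W hwa hwb (m+2)
    simp only [Nat.add_sub_cancel, show m + 2 - 1 = m + 1 by omega] at h
    refine h.trans ?_
    push_cast
    gcongr
  have hv_pow : |va^(2*(m+2)) - vb^(2*(m+2))| ≤ (2*((m:ℝ)+2)) * r^(2*m+3) * (2*r^2*δ) := by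
    have h := aux_pow_sub_pow va vb r hva hvb (2*(m+2))
    have he : 2*(m+2) - 1 = 2*m+3 := by omega
    rw [he] at h
    refine h.trans ?_
    push_cast
    gcongr
  -- splitting
  have hsplit : |Jk * p^(m+2) * va^(2*(m+2)) * wa^(m+2)
        - Jk * p^(m+2) * vb^(2*(m+2)) * wb^(m+2)|
      ≤ B^(m+2) * p^(m+2) * (r^(2*(m+2)) * (((m:ℝ)+2) * W^(m+1) * (2*δ/p))
          + W^(m+2) * ((2*((m:ℝ)+2)) * r^(2*m+3) * (2*r^2*δ))) := by
    have hid : Jk * p^(m+2) * va^(2*(m+2)) * wa^(m+2)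
        - Jk * p^(m+2) * vb^(2*(m+2)) * wb^(m+2)
        = Jk * p^(m+2) * (va^(2*(m+2)) * (wa^(m+2) - wb^(m+2))
            + wb^(m+2) * (va^(2*(m+2)) - vb^(2*(m+2)))) := by ring
    rw [hid, abs_mul, abs_mul]
    rw [abs_of_pos (pow_pos hp0 (m+2))]
    have habs : |va^(2*(m+2)) * (wa^(m+2) - wb^(m+2))
            + wb^(m+2) * (va^(2*(m+2)) - vb^(2*(m+2)))|
        ≤ r^(2*(m+2)) * (((m:ℝ)+2) * W^(m+1) * (2*δ/p))
          + W^(m+2) * ((2*((m:ℝ)+2)) * r^(2*m+3) * (2*r^2*δ)) := by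
      refine (abs_add_le _ _).trans ?_
      rw [abs_mul, abs_mul]
      have h1 : |va^(2*(m+2))| ≤ r^(2*(m+2)) := by
        rw [abs_pow]; gcongr
      have h2 : |wb^(m+2)| ≤ W^(m+2) := by
        rw [abs_pow]; gcongr
      have hx1 : 0 ≤ |wa^(m+2) - wb^(m+2)| := abs_nonneg _
      have hx2 : 0 ≤ |va^(2*(m+2)) - vb^(2*(m+2))| := abs_nonneg _
      have := mul_le_mul h1 hW_pow hx1 (by positivity)
      have := mul_le_mul h2 hv_pow hx2 (by positivity)
      linarith
    have hp2 : (0:ℝ) ≤ p^(m+2) := by positivity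
    have hBp : (0:ℝ) ≤ B^(m+2) := by positivity
    exact mul_le_mul (mul_le_mul hJ le_rfl hp2 hBp) habs (abs_nonneg _) (by positivity)
  -- combine
  have hmain := mul_le_mul_of_nonneg_left hsplit (show (0:ℝ) ≤ (2:ℝ)^(m+2) by positivity)
  refine hmain.trans ?_
  -- split into two pieces
  have e0 : (2:ℝ)^(m+2) * (B^(m+2) * p^(m+2) * (r^(2*(m+2)) * (((m:ℝ)+2) * W^(m+1) * (2*δ/p))
          + W^(m+2) * ((2*((m:ℝ)+2)) * r^(2*m+3) * (2*r^2*δ))))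
      = (2*((m:ℝ)+2)*δ) * ((p^(m+1) * B^(m+2)) * ((2:ℝ)^(m+2) * (r^2 * ((r^2*W)^(m+1)))))
      + (4*((m:ℝ)+2)*δ) * ((p^(m+1) * B^(m+2)) * (p * (r * (2*W*r^2)^(m+2)))) := by
    field_simp
    ring
  rw [e0]
  have hb1 : (2*((m:ℝ)+2)*δ) * ((p^(m+1) * B^(m+2)) * ((2:ℝ)^(m+2) * (r^2 * ((r^2*W)^(m+1)))))
      ≤ (2*((m:ℝ)+2)*δ) * ((ε * (8:ℝ)⁻¹^(m+2)) * ((2:ℝ)^(m+2) * ((2/W) * ((2:ℝ)^(m+1))))) := by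
    gcongr
  have hb2 : (4*((m:ℝ)+2)*δ) * ((p^(m+1) * B^(m+2)) * (p * (r * (2*W*r^2)^(m+2))))
      ≤ (4*((m:ℝ)+2)*δ) * ((ε * (8:ℝ)⁻¹^(m+2)) * (p * (r * ((4:ℝ)^(m+2))))) := by
    have h4 : (2*W*r^2)^(m+2) ≤ (4:ℝ)^(m+2) := by
      refine pow_le_pow_left₀ (by positivity) ?_ _
      nlinarith
    gcongr
  have hS1 : ((8:ℝ)⁻¹)^(m+2) * ((2:ℝ)^(m+2) * ((2:ℝ)^(m+2))) = (1/2:ℝ)^(m+2) := by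
    rw [← mul_pow, ← mul_pow]
    norm_num
  have hS2 : ((8:ℝ)⁻¹)^(m+2) * (4:ℝ)^(m+2) = (1/2:ℝ)^(m+2) := by
    rw [← mul_pow]
    norm_num
  have e1 : (2*((m:ℝ)+2)*δ) * ((ε * (8:ℝ)⁻¹^(m+2)) * ((2:ℝ)^(m+2) * ((2/W) * ((2:ℝ)^(m+1)))))
      = (2*ε/W) * (((m:ℝ)+2) * (1/2)^(m+2)) * δ := by
    have h21 : (2:ℝ)^(m+2) = 2 * (2:ℝ)^(m+1) := by rw [← pow_succ']
    rw [h21]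
    rw [h21] at hS1
    linear_combination (2*((m:ℝ)+2)*δ*ε/W) * hS1
  have e2 : (4*((m:ℝ)+2)*δ) * ((ε * (8:ℝ)⁻¹^(m+2)) * (p * (r * ((4:ℝ)^(m+2)))))
      = (4*p*ε*r) * (((m:ℝ)+2) * (1/2)^(m+2)) * δ := by
    linear_combination (4*((m:ℝ)+2)*δ*ε*p*r) * hS2
  calc (2*((m:ℝ)+2)*δ) * ((p^(m+1) * B^(m+2)) * ((2:ℝ)^(m+2) * (r^2 * ((r^2*W)^(m+1)))))
      + (4*((m:ℝ)+2)*δ) * ((p^(m+1) * B^(m+2)) * (p * (r * (2*W*r^2)^(m+2))))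
      ≤ (2*((m:ℝ)+2)*δ) * ((ε * (8:ℝ)⁻¹^(m+2)) * ((2:ℝ)^(m+2) * ((2/W) * ((2:ℝ)^(m+1)))))
      + (4*((m:ℝ)+2)*δ) * ((ε * (8:ℝ)⁻¹^(m+2)) * (p * (r * ((4:ℝ)^(m+2))))) := by
        linarith
    _ = (2*ε/W + 4*p*ε*r) * (((m:ℝ)+2) * (1/2)^(m+2)) * δ := by
        rw [e1, e2]; ring

set_option maxHeartbeats 1000000 in
lemma key_estimate (p ε B Jk : ℝ) (k : ℕ) (hk : 2 ≤ k)
    (hε0 : 0 < ε) (hε : ε < 1 / 2)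
    (hcond1 : (1 / 2) * ((1 - 2 * ε)⁻¹) ^ 2 * (1 + 2 * ε) ≤ 1)
    (hp0 : 0 < p) (hp1 : p ≤ 1) (hB : 0 < B)
    (hpB : p ^ (k - 1) * B ^ k ≤ ε * (8 : ℝ)⁻¹ ^ k)
    (hJ : |Jk| ≤ B ^ k)
    (a b : ℝ) (ha : |a| ≤ p * ε) (hb : |b| ≤ p * ε) :
    (2:ℝ)^k * |Jk * p^k * ((1-2*a)⁻¹)^(2*k) * (1 - 2*a/p)^k
              - Jk * p^k * ((1-2*b)⁻¹)^(2*k) * (1 - 2*b/p)^k|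
      ≤ (2*ε/(1+2*ε) + 4*p*ε/(1-2*ε)) * ((k:ℝ) * (1/2:ℝ)^k) * |a - b| := by
  obtain ⟨m, rfl⟩ : ∃ m, k = m + 2 := ⟨k - 2, by omega⟩
  have h2ε : (0:ℝ) < 1 - 2*ε := by linarith
  have hW0 : (0:ℝ) < 1 + 2*ε := by linarith
  have hr0 : (0:ℝ) < (1 - 2*ε)⁻¹ := inv_pos.mpr h2ε
  have hpε : p * ε ≤ ε := by nlinarith
  have haε : |a| ≤ ε := ha.trans hpε
  have hbε : |b| ≤ ε := hb.trans hpε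
  have ha' := abs_le.mp haε
  have hb' := abs_le.mp hbε
  have h1a0 : (0:ℝ) < 1 - 2*a := by linarith [ha'.2]
  have h1b0 : (0:ℝ) < 1 - 2*b := by linarith [hb'.2]
  have hva : |(1-2*a)⁻¹| ≤ (1-2*ε)⁻¹ := by
    rw [abs_of_pos (inv_pos.mpr h1a0)]
    exact inv_anti₀ h2ε (by linarith [ha'.1])
  have hvb : |(1-2*b)⁻¹| ≤ (1-2*ε)⁻¹ := by
    rw [abs_of_pos (inv_pos.mpr h1b0)]
    exact inv_anti₀ h2ε (by linarith [hb'.1])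
  have hap : a/p ≤ ε := (div_le_iff₀ hp0).mpr (by nlinarith [le_abs_self a])
  have hap' : -ε ≤ a/p := (le_div_iff₀ hp0).mpr (by nlinarith [neg_abs_le a])
  have hbp : b/p ≤ ε := (div_le_iff₀ hp0).mpr (by nlinarith [le_abs_self b])
  have hbp' : -ε ≤ b/p := (le_div_iff₀ hp0).mpr (by nlinarith [neg_abs_le b])
  have hwa : |1 - 2*a/p| ≤ 1 + 2*ε := by
    rw [abs_le]
    have e : 2*a/p = 2*(a/p) := by ring
    rw [e]
    constructor
    · linarith
    · linarith
  have hwb : |1 - 2*b/p| ≤ 1 + 2*ε := by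
    rw [abs_le]
    have e : 2*b/p = 2*(b/p) := by ring
    rw [e]
    constructor
    · linarith
    · linarith
  have hvab : |(1-2*a)⁻¹ - (1-2*b)⁻¹| ≤ 2 * ((1-2*ε)⁻¹)^2 * |a - b| := by
    have hid : (1-2*a)⁻¹ - (1-2*b)⁻¹ = 2*(a-b) * (1-2*a)⁻¹ * (1-2*b)⁻¹ := by
      field_simp
      ring
    rw [hid, abs_mul, abs_mul, abs_mul, abs_two]
    have h1 : 0 ≤ |a - b| := abs_nonneg _
    nlinarith [abs_nonneg ((1-2*a)⁻¹), abs_nonneg ((1-2*b)⁻¹),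
      mul_le_mul hva hvb (abs_nonneg _) (le_of_lt hr0)]
  have hwab : |(1 - 2*a/p) - (1 - 2*b/p)| ≤ 2 * |a - b| / p := by
    have hid : (1 - 2*a/p) - (1 - 2*b/p) = 2*(b-a)/p := by
      field_simp
      ring
    rw [hid, abs_div, abs_mul, abs_two, abs_of_pos hp0, abs_sub_comm b a]
  have hr2W : ((1-2*ε)⁻¹)^2 * (1+2*ε) ≤ 2 := by linarith
  have hW1 : (1:ℝ) ≤ 1 + 2*ε := by linarith
  have hpB' : p^(m+1) * B^(m+2) ≤ ε * (8:ℝ)⁻¹^(m+2) := by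
    have : m + 2 - 1 = m + 1 := by omega
    rwa [this] at hpB
  have h := key2 ε p B Jk |a-b| ((1-2*ε)⁻¹) (1+2*ε) ((1-2*a)⁻¹) ((1-2*b)⁻¹)
    (1 - 2*a/p) (1 - 2*b/p) m hr0 hr0.le hW0 hW0.le hp0 hp0.le hp1 hε0 hε0.le
    (abs_nonneg _) hB.le hva hvb hwa hwb hvab hwab hr2W hW1 hpB' hJ
  refine h.trans (le_of_eq ?_)
  push_cast
  ring

theorem stmt1 (p ε B : ℝ) (J : ℕ → ℝ)
    (hε0 : 0 < ε) (hε : ε < 1 / 2)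
    (hcond1 : (1 / 2) * ((1 - 2 * ε)⁻¹) ^ 2 * (1 + 2 * ε) ≤ 1)
    (hcond2 : 6 * ε / (1 - 2 * ε) ≤ 1)
    (hp0 : 0 < p) (hp1 : p ≤ 1) (hB : 0 < B)
    (hpB : ∀ k : ℕ, 2 ≤ k → p ^ (k - 1) * B ^ k ≤ ε * (8 : ℝ)⁻¹ ^ k)
    (hJ : ∀ k : ℕ, 2 ≤ k → |J k| ≤ B ^ k) :
    ∃ c : ℝ, 0 ≤ c ∧ c < 1 ∧
      ∀ α ∈ Sset p ε, ∀ β ∈ Sset p ε,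
        seqNorm (fun k => fMap p J α k - fMap p J β k) ≤
          ENNReal.ofReal c * seqNorm (fun k => α k - β k) := by
  have h2ε : (0:ℝ) < 1 - 2*ε := by linarith
  have hW0 : (0:ℝ) < 1 + 2*ε := by linarith
  obtain ⟨c, hc⟩ : ∃ c : ℝ, c = 2*ε/(1+2*ε) + 4*p*ε/(1-2*ε) := ⟨_, rfl⟩
  have hc0 : 0 ≤ c := by
    rw [hc]
    apply add_nonneg <;> apply div_nonneg <;> nlinarith
  have hε8 : ε ≤ 1/8 := by
    have h6 : 6*ε ≤ 1 - 2*ε := (div_le_one h2ε).mp hcond2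
    linarith
  have hc1 : c < 1 := by
    rw [hc]
    have h1 : 2*ε/(1+2*ε) < 2*ε := by
      rw [div_lt_iff₀ hW0]
      nlinarith
    have h6 : 6*ε ≤ 1 - 2*ε := (div_le_one h2ε).mp hcond2
    have h2 : 4*p*ε/(1-2*ε) ≤ 2/3 := by
      rw [div_le_iff₀ h2ε]
      nlinarith
    linarith
  refine ⟨c, hc0, hc1, fun α hα β hβ => ?_⟩
  have hpε0 : (0:ℝ) ≤ p * ε := by positivity
  have hfinα : seqNorm α ≠ ⊤ := (hα.trans_lt ENNReal.ofReal_lt_top).ne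
  have hfinβ : seqNorm β ≠ ⊤ := (hβ.trans_lt ENNReal.ofReal_lt_top).ne
  have hsuma := summable_gfun α hfinα
  have hsumb := summable_gfun β hfinβ
  have hTα : ∑' k, gfun α k ≤ p * ε := by
    have h := hα
    rw [Sset, Set.mem_setOf_eq, seqNorm_eq_ofReal α hsuma] at h
    exact (ENNReal.ofReal_le_ofReal_iff hpε0).mp h
  have hTβ : ∑' k, gfun β k ≤ p * ε := by
    have h := hβ
    rw [Sset, Set.mem_setOf_eq, seqNorm_eq_ofReal β hsumb] at h
    exact (ENNReal.ofReal_le_ofReal_iff hpε0).mp h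
  have hTα0 : 0 ≤ ∑' k, gfun α k := tsum_nonneg (gfun_nonneg α)
  have hTβ0 : 0 ≤ ∑' k, gfun β k := tsum_nonneg (gfun_nonneg β)
  have haA : |seqA α| ≤ p * ε := (abs_seqA_le α hsuma).trans (by linarith)
  have hbA : |seqA β| ≤ p * ε := (abs_seqA_le β hsumb).trans (by linarith)
  -- the difference sequence
  set γ : ℕ → ℝ := fun k => α k - β k with hγ
  have hfinγ : seqNorm γ ≠ ⊤ := by
    refine ((seqNorm_sub_le α β).trans_lt ?_).ne
    exact ENNReal.add_lt_top.mpr ⟨hα.trans_lt ENNReal.ofReal_lt_top,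
      hβ.trans_lt ENNReal.ofReal_lt_top⟩
  have hsumg := summable_gfun γ hfinγ
  set T : ℝ := ∑' k, gfun γ k with hT
  have hT0 : 0 ≤ T := tsum_nonneg (gfun_nonneg γ)
  set δ : ℝ := |seqA α - seqA β| with hδ
  have hδT : δ ≤ (1/2) * T := by
    rw [hδ, ← seqA_sub α β hsuma hsumb]
    exact abs_seqA_le γ hsumg
  have hδ0 : 0 ≤ δ := abs_nonneg _
  -- termwise bound
  have hterm : ∀ k : ℕ,
      (if 2 ≤ k then (2 : ℝ≥0∞) ^ k * ENNReal.ofReal |fMap p J α k - fMap p J β k| else 0)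
        ≤ ENNReal.ofReal ((c * δ) * ((k:ℝ) * (1/2:ℝ)^k)) := by
    intro k
    split
    · rename_i hk
      have hfa : fMap p J α k = J k * p ^ k * ((1 - 2 * seqA α)⁻¹) ^ (2 * k)
          * (1 - 2 * seqA α / p) ^ k := by rw [fMap]; simp [hk]
      have hfb : fMap p J β k = J k * p ^ k * ((1 - 2 * seqA β)⁻¹) ^ (2 * k)
          * (1 - 2 * seqA β / p) ^ k := by rw [fMap]; simp [hk]
      have hkey := key_estimate p ε B (J k) k hk hε0 hε hcond1 hp0 hp1 hB
        (hpB k hk) (hJ k hk) (seqA α) (seqA β) haA hbA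
      have he : (2 : ℝ≥0∞) ^ k * ENNReal.ofReal |fMap p J α k - fMap p J β k|
          = ENNReal.ofReal ((2:ℝ)^k * |fMap p J α k - fMap p J β k|) := by
        rw [ENNReal.ofReal_mul (by positivity), ENNReal.ofReal_pow (by norm_num)]
        norm_num
      rw [he]
      apply ENNReal.ofReal_le_ofReal
      rw [hfa, hfb]
      refine hkey.trans (le_of_eq (by rw [hc]; ring))
    · positivity
  calc seqNorm (fun k => fMap p J α k - fMap p J β k)
      ≤ ∑' k : ℕ, ENNReal.ofReal ((c * δ) * ((k:ℝ) * (1/2:ℝ)^k)) := by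
        rw [seqNorm]
        exact ENNReal.tsum_le_tsum hterm
    _ = ENNReal.ofReal (∑' k : ℕ, (c * δ) * ((k:ℝ) * (1/2:ℝ)^k)) := by
        rw [ENNReal.ofReal_tsum_of_nonneg]
        · intro k
          positivity
        · apply Summable.mul_left
          exact (summable_pow_mul_geometric_of_norm_lt_one (R := ℝ) 1
            (r := (1/2:ℝ)) (by norm_num)).congr (fun k => by push_cast; ring)
    _ = ENNReal.ofReal ((c * δ) * 2) := by
        rw [tsum_mul_left]
        congr 1
        have h2 := tsum_coe_mul_geometric_of_norm_lt_one
          (show ‖(1/2 : ℝ)‖ < 1 by norm_num)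
        rw [h2]
        norm_num
    _ ≤ ENNReal.ofReal (c * T) := by
        apply ENNReal.ofReal_le_ofReal
        nlinarith
    _ = ENNReal.ofReal c * seqNorm γ := by
        rw [seqNorm_eq_ofReal γ hsumg, ← ENNReal.ofReal_mul hc0, hT]
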